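/- arXiv:2602.03206 — 4 statements merged into one kernel-verified Lean document; each statement's English description precedes it below -/
import Mathlib

section
/- Let L be a Dedekind complete unital f-algebra and let λ ∈ L. Then there exists a sequence of idempotents π_n in L with π_n increasing to 1 (in the order of L) such that −n·1 ≤ π_n·λ ≤ n·1 for all n ∈ ℕ. Moreover, if λ ≥ 0, then π_n·λ increases to λ. -/
/-- A Dedekind complete unital `f`-algebra over the reals. -/
class DFAlgebra (L : Type*) extends CommRing L, Lattice L, Algebra ℝ L where
  add_le_add_left : ∀ a b : L, a ≤ b → ∀ c : L, c + a ≤ c + b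
  mul_nonneg : ∀ a b : L, 0 ≤ a → 0 ≤ b → 0 ≤ a * b
  f_prop : ∀ a b c : L, a ⊓ b = 0 → 0 ≤ c → (c * a) ⊓ b = 0
  algebraMap_nonneg : ∀ r : ℝ, 0 ≤ r → 0 ≤ Algebra.algebraMap ℝ L r
  dedekind : ∀ S : Set L, S.Nonempty → BddAbove S → ∃ a : L, IsLUB S a

/-- A partially ordered `L`-module. -/
class POModule (L : Type*) [DFAlgebra L] (X : Type*) extends
    AddCommGroup X, Module L X, PartialOrder X where
  add_le_add_left : ∀ a b : X, a ≤ b → ∀ c : X, c + a ≤ c + b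
  smul_le_smul : ∀ l : L, 0 ≤ l → ∀ a b : X, a ≤ b → l • a ≤ l • b

namespace DFAux

variable {L : Type*} [DFAlgebra L]

instance : CovariantClass L L (· + ·) (· ≤ ·) :=
  ⟨fun c a b h => DFAlgebra.add_le_add_left a b h c⟩

instance : CovariantClass L L (Function.swap (· + ·)) (· ≤ ·) :=
  ⟨fun c a b h => by
    have := DFAlgebra.add_le_add_left a b h c
    simpa [add_comm] using this⟩

lemma one_nonneg : (0 : L) ≤ 1 := by
  have := DFAlgebra.algebraMap_nonneg (L := L) 1 zero_le_one
  simpa using this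

lemma mul_le_mul_left'' {a b c : L} (h : a ≤ b) (hc : 0 ≤ c) : c * a ≤ c * b := by
  have h2 := DFAlgebra.mul_nonneg c (b - a) hc (by rwa [sub_nonneg])
  rw [mul_sub, sub_nonneg] at h2
  exact h2

lemma nsmul_le_nsmul' {a b : L} (h : a ≤ b) : ∀ n : ℕ, n • a ≤ n • b := by
  intro n
  induction n with
  | zero => simp
  | succ n ih => rw [succ_nsmul, succ_nsmul]; exact add_le_add ih h

lemma nsmul_nonneg' {a : L} (h : 0 ≤ a) (n : ℕ) : 0 ≤ n • a := by
  simpa using nsmul_le_nsmul' h n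

lemma nsmul_le_nsmul_nat {a : L} (ha : 0 ≤ a) {m n : ℕ} (h : m ≤ n) : m • a ≤ n • a := by
  have : n • a = m • a + (n - m) • a := by
    rw [← add_nsmul, Nat.add_sub_cancel' h]
  rw [this]
  exact le_add_of_nonneg_right (nsmul_nonneg' ha _)

lemma arch {w b : L} (hw : 0 ≤ w) (h : ∀ n : ℕ, n • w ≤ b) : w ≤ 0 := by
  obtain ⟨s, hs⟩ := DFAlgebra.dedekind (Set.range fun n : ℕ => n • w)
    ⟨0, ⟨0, by simp⟩⟩ ⟨b, by rintro x ⟨n, rfl⟩; exact h n⟩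
  have h1 : ∀ n : ℕ, n • w ≤ s - w := by
    intro n
    have h2 : (n + 1) • w ≤ s := hs.1 ⟨n + 1, rfl⟩
    rw [succ_nsmul] at h2
    exact le_sub_iff_add_le.mpr h2
  have h3 : s ≤ s - w := hs.2 (by rintro x ⟨n, rfl⟩; exact h1 n)
  have := le_sub_iff_add_le.mp h3
  simpa using this

lemma inf_subadd {a b c : L} (ha : 0 ≤ a) (hb : 0 ≤ b) (hc : 0 ≤ c) :
    (a + b) ⊓ c ≤ a ⊓ c + b ⊓ c := by
  have hrw : a ⊓ c + b ⊓ c = ((a + b) ⊓ (a + c)) ⊓ ((c + b) ⊓ (c + c)) := by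
    rw [inf_add, add_inf, add_inf]
  rw [hrw]
  refine le_inf (le_inf inf_le_left ?_) (le_inf ?_ ?_)
  · exact inf_le_right.trans (le_add_of_nonneg_left ha)
  · exact inf_le_right.trans (le_add_of_nonneg_right hb)
  · exact inf_le_right.trans (le_add_of_nonneg_left hc)

lemma nsmul_inf_eq_zero {a c : L} (ha : 0 ≤ a) (hc : 0 ≤ c) (h : a ⊓ c = 0) :
    ∀ n : ℕ, (n • a) ⊓ c = 0 := by
  intro n
  induction n with
  | zero => rw [zero_nsmul]; exact inf_eq_left.mpr hc
  | succ n ih =>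
    refine le_antisymm ?_ (le_inf (nsmul_nonneg' ha _) hc)
    rw [succ_nsmul]
    calc (n • a + a) ⊓ c ≤ (n • a) ⊓ c + a ⊓ c :=
          inf_subadd (nsmul_nonneg' ha n) ha hc
      _ = 0 := by rw [ih, h, add_zero]

lemma isLUB_inf_nonpos {S : Set L} {t c : L} (ht : IsLUB S t)
    (h : ∀ s ∈ S, s ⊓ c ≤ 0) : t ⊓ c ≤ 0 := by
  have key : ∀ s ∈ S, s ≤ (t ⊔ c) - c := by
    intro s hs
    rw [le_sub_iff_add_le, ← inf_add_sup s c]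
    calc s ⊓ c + (s ⊔ c) ≤ 0 + (t ⊔ c) :=
          add_le_add (h s hs) (sup_le_sup_right (ht.1 hs) c)
      _ = t ⊔ c := zero_add _
  have h3 : t ≤ (t ⊔ c) - c := ht.2 key
  have h4 : t + c ≤ t ⊔ c := le_sub_iff_add_le.mp h3
  rw [← inf_add_sup t c] at h4
  simpa using h4

lemma weak_unit {c : L} (hc : 0 ≤ c) (h : c ⊓ 1 = 0) : c = 0 := by
  have h2 := DFAlgebra.f_prop (1 : L) c c (by rwa [inf_comm]) hc
  rwa [mul_one, inf_idem] at h2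

lemma inf_shift {c a : L} (n : ℕ) (h : c ⊓ ((n • (1 : L) - a) ⊔ 0) = 0) :
    (c + a) ⊓ (n • (1 : L)) ≤ a := by
  have h1 : c ⊓ (n • (1 : L) - a) ≤ 0 := by
    calc c ⊓ (n • (1 : L) - a) ≤ c ⊓ ((n • (1 : L) - a) ⊔ 0) :=
          inf_le_inf_left c le_sup_left
      _ = 0 := h
  have h2 := add_le_add_left h1 a
  rwa [inf_add, sub_add_cancel, zero_add] at h2

lemma nsmul_le_of_inf {d a : L} (hd0 : 0 ≤ d) (hd1 : d ≤ 1) (ha : 0 ≤ a)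
    (h : ∀ n : ℕ, (d + a) ⊓ (n • (1 : L)) ≤ a) : ∀ n : ℕ, n • d ≤ a := by
  intro n
  induction n with
  | zero => simpa using ha
  | succ n ih =>
    have h1 : (n + 1) • d ≤ d + a := by
      rw [succ_nsmul, add_comm d a]
      exact add_le_add ih le_rfl
    have h2 : (n + 1) • d ≤ (n + 1) • (1 : L) := nsmul_le_nsmul' hd1 _
    exact (le_inf h1 h2).trans (h (n + 1))

end DFAux


open DFAux in
/-- For every λ in a Dedekind complete unital f-algebra there is a sequence of
idempotents increasing to 1 on which λ is bounded; if λ ≥ 0 then π n * λ ↑ λ. -/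
theorem stmt1 (L : Type*) [DFAlgebra L] (l : L) :
    ∃ π : ℕ → L,
      (∀ n, π n * π n = π n) ∧ Monotone π ∧ IsLUB (Set.range π) 1 ∧
      (∀ n : ℕ, -(n : L) ≤ π n * l ∧ π n * l ≤ (n : L)) ∧
      (0 ≤ l → Monotone (fun n => π n * l) ∧ IsLUB (Set.range fun n => π n * l) l) := by
  
  classical
  have hone : (0 : L) ≤ 1 := one_nonneg
  set m : L := |l| with hm
  have hm0 : 0 ≤ m := abs_nonneg l
  have hlm : l ≤ m := le_abs_self l
  have hlm' : -l ≤ m := neg_le_abs l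
  set u : ℕ → L := fun n => (n • (1 : L) - m) ⊔ 0 with hu
  have hu0 : ∀ n, 0 ≤ u n := fun n => le_sup_right
  have humono : ∀ {a b : ℕ}, a ≤ b → u a ≤ u b := by
    intro a b hab
    exact sup_le_sup_right (sub_le_sub_right (nsmul_le_nsmul_nat hone hab) m) 0
  -- the candidate idempotents
  have hex : ∀ n : ℕ, ∃ p : L, IsLUB (Set.range fun k : ℕ => (k • u n) ⊓ 1) p := by
    intro n
    refine DFAlgebra.dedekind _ ⟨_, ⟨0, rfl⟩⟩ ⟨1, ?_⟩
    rintro x ⟨k, rfl⟩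
    exact inf_le_right
  choose π hπ using hex
  have hπ1 : ∀ n, π n ≤ 1 := by
    intro n
    refine (hπ n).2 ?_
    rintro x ⟨k, rfl⟩
    exact inf_le_right
  have hπ0 : ∀ n, 0 ≤ π n := by
    intro n
    have h0 : ((0 : ℕ) • u n) ⊓ 1 = 0 := by
      rw [zero_nsmul]; exact inf_eq_left.mpr hone
    have h2 : ((0 : ℕ) • u n) ⊓ 1 ≤ π n := (hπ n).1 ⟨0, rfl⟩
    rwa [h0] at h2
  -- (1 - π n) is disjoint from u n
  have key1 : ∀ n, (1 - π n) ⊓ u n = 0 := by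
    intro n
    set w : L := (1 - π n) ⊓ u n with hw
    have hw0 : 0 ≤ w := le_inf (sub_nonneg.mpr (hπ1 n)) (hu0 n)
    have hwπ : π n ≤ 1 - w := le_sub_comm.mp inf_le_left
    have hbdd : ∀ k : ℕ, k • w ≤ 1 := by
      intro k
      induction k with
      | zero => simpa using hone
      | succ k ih =>
        have h1 : k • w ⊓ 1 = k • w := inf_eq_left.mpr ih
        have h2 : k • w ≤ 1 - w := by
          rw [← h1]
          calc (k • w) ⊓ 1 ≤ (k • u n) ⊓ 1 :=
                inf_le_inf_right 1 (nsmul_le_nsmul' inf_le_right k)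
            _ ≤ π n := (hπ n).1 ⟨k, rfl⟩
            _ ≤ 1 - w := hwπ
        rw [succ_nsmul]
        have := add_le_add_left h2 w
        rwa [sub_add_cancel] at this
    exact le_antisymm (arch hw0 hbdd) hw0
  -- a general disjointness transfer to π n
  have keyπ : ∀ n, ∀ c : L, 0 ≤ c → u n ⊓ c = 0 → π n ⊓ c = 0 := by
    intro n c hc hdisj
    refine le_antisymm ?_ (le_inf (hπ0 n) hc)
    refine isLUB_inf_nonpos (hπ n) ?_
    rintro s ⟨k, rfl⟩
    calc ((k • u n) ⊓ 1) ⊓ c ≤ (k • u n) ⊓ c := inf_le_inf_right c inf_le_left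
      _ = 0 := nsmul_inf_eq_zero (hu0 n) hc hdisj k
  -- idempotency
  have hidem : ∀ n, π n * π n = π n := by
    intro n
    have hd : π n ⊓ (1 - π n) = 0 := by
      rw [inf_comm]
      refine le_antisymm ?_ (le_inf (sub_nonneg.mpr (hπ1 n)) (hπ0 n))
      rw [inf_comm]
      have := keyπ n (1 - π n) (sub_nonneg.mpr (hπ1 n)) (by rw [inf_comm]; exact key1 n)
      exact this.le
    have h1 : π n * (1 - π n) ≤ π n := by
      have := mul_le_mul_left'' (show (1 : L) - π n ≤ 1 from sub_le_self 1 (hπ0 n)) (hπ0 n)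
      rwa [mul_one] at this
    have h2 : π n * (1 - π n) ≤ 1 - π n := by
      have := mul_le_mul_left'' (hπ1 n) (sub_nonneg.mpr (hπ1 n))
      rw [mul_one] at this
      calc π n * (1 - π n) = (1 - π n) * π n := mul_comm _ _
        _ ≤ 1 - π n := this
    have h3 : π n * (1 - π n) = 0 :=
      le_antisymm ((le_inf h1 h2).trans hd.le)
        (DFAlgebra.mul_nonneg _ _ (hπ0 n) (sub_nonneg.mpr (hπ1 n)))
    rw [mul_sub, mul_one, sub_eq_zero] at h3
    exact h3.symm
  -- monotone
  have hmono : Monotone π := by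
    intro a b hab
    refine (hπ a).2 ?_
    rintro x ⟨k, rfl⟩
    calc (k • u a) ⊓ 1 ≤ (k • u b) ⊓ 1 :=
          inf_le_inf_right 1 (nsmul_le_nsmul' (humono hab) k)
      _ ≤ π b := (hπ b).1 ⟨k, rfl⟩
  -- the bound via the product with m
  have hbound : ∀ n, π n * m ≤ n • (1 : L) := by
    intro n
    set v : L := (m - n • (1 : L)) ⊔ 0 with hv
    have hv0 : 0 ≤ v := le_sup_right
    have huv : u n ⊓ v = 0 := by
      have h := posPart_inf_negPart_eq_zero (n • (1 : L) - m)
      have hpos : (n • (1 : L) - m)⁺ = u n := by rw [posPart_def]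
      have hneg : (n • (1 : L) - m)⁻ = v := by rw [negPart_def, neg_sub]
      rwa [hpos, hneg] at h
    have hπv : π n ⊓ v = 0 := keyπ n v hv0 huv
    have hvπ : v * π n = 0 := by
      have h1 := DFAlgebra.f_prop (π n) v v hπv hv0
      have h2 : v * π n ≤ v := by
        have := mul_le_mul_left'' (hπ1 n) hv0
        rwa [mul_one] at this
      refine le_antisymm ?_ (DFAlgebra.mul_nonneg _ _ hv0 (hπ0 n))
      rw [← h1]
      exact le_inf le_rfl h2
    have h3 : π n * (m - n • (1 : L)) ≤ 0 := by
      calc π n * (m - n • (1 : L)) ≤ π n * v := mul_le_mul_left'' le_sup_left (hπ0 n)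
        _ = 0 := by rw [mul_comm]; exact hvπ
    rw [mul_sub, sub_nonpos] at h3
    calc π n * m ≤ π n * (n • (1 : L)) := h3
      _ = n • (π n * 1) := mul_smul_comm n (π n) 1
      _ = n • π n := by rw [mul_one]
      _ ≤ n • (1 : L) := nsmul_le_nsmul' (hπ1 n) n
  have hnatcast : ∀ n : ℕ, (n : L) = n • (1 : L) := by
    intro n; rw [nsmul_eq_mul, mul_one]
  have hbounds : ∀ n : ℕ, -(n : L) ≤ π n * l ∧ π n * l ≤ (n : L) := by
    intro n
    have h1 : π n * l ≤ π n * m := mul_le_mul_left'' hlm (hπ0 n)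
    have h2 : π n * (-l) ≤ π n * m := mul_le_mul_left'' hlm' (hπ0 n)
    constructor
    · rw [hnatcast, neg_le]
      calc -(π n * l) = π n * (-l) := by ring
        _ ≤ π n * m := h2
        _ ≤ n • (1 : L) := hbound n
    · rw [hnatcast]
      exact h1.trans (hbound n)
  -- sup of π is 1
  have hlub1 : IsLUB (Set.range π) 1 := by
    constructor
    · rintro x ⟨n, rfl⟩; exact hπ1 n
    · intro b hb
      have hb0 : 0 ≤ b := (hπ0 0).trans (hb ⟨0, rfl⟩)
      set c : L := 1 - b ⊓ 1 with hc
      have hc0 : 0 ≤ c := sub_nonneg.mpr inf_le_right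
      have hc1 : c ≤ 1 := sub_le_self 1 (le_inf hb0 hone)
      have hcu : ∀ n, c ⊓ u n = 0 := by
        intro n
        have h1 : c ≤ 1 - π n :=
          sub_le_sub_left (le_inf (hb ⟨n, rfl⟩) (hπ1 n)) 1
        refine le_antisymm ?_ (le_inf hc0 (hu0 n))
        calc c ⊓ u n ≤ (1 - π n) ⊓ u n := inf_le_inf_right _ h1
          _ = 0 := key1 n
      have h4 : ∀ n : ℕ, (c + m) ⊓ (n • (1 : L)) ≤ m := fun n => inf_shift n (hcu n)
      have h5 : ∀ n : ℕ, n • c ≤ m := nsmul_le_of_inf hc0 hc1 hm0 h4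
      have h6 : c = 0 := le_antisymm (arch hc0 h5) hc0
      have h7 : b ⊓ 1 = 1 := by
        have := sub_eq_zero.mp h6
        exact this.symm
      calc (1 : L) = b ⊓ 1 := h7.symm
        _ ≤ b := inf_le_left
  -- final part
  refine ⟨π, hidem, hmono, hlub1, hbounds, ?_⟩
  intro hl
  have hml : m = l := abs_of_nonneg hl
  have hub : ∀ n, π n * l ≤ l := by
    intro n
    have := mul_le_mul_left'' hl (sub_nonneg.mpr (hπ1 n))
    rw [mul_zero] at this
    have h2 : 0 ≤ l - π n * l := by
      calc (0 : L) ≤ (1 - π n) * l := this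
        _ = l - π n * l := by ring
    exact sub_nonneg.mp h2
  constructor
  · intro a b hab
    simp only
    have h1 := DFAlgebra.mul_nonneg (π b - π a) l (sub_nonneg.mpr (hmono hab)) hl
    rw [sub_mul, sub_nonneg] at h1
    exact h1
  · constructor
    · rintro x ⟨n, rfl⟩; exact hub n
    · intro b hb
      set c : L := l - b ⊓ l with hc
      have hc0 : 0 ≤ c := sub_nonneg.mpr inf_le_right
      have hcu : ∀ n, c ⊓ u n = 0 := by
        intro n
        have h1 : (l * (1 - π n)) ⊓ u n = 0 :=
          DFAlgebra.f_prop (1 - π n) (u n) l (key1 n) hl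
        have h2 : c ≤ l * (1 - π n) := by
          have h3 : π n * l ≤ b ⊓ l := le_inf (hb ⟨n, rfl⟩) (hub n)
          calc c = l - b ⊓ l := hc
            _ ≤ l - π n * l := sub_le_sub_left h3 l
            _ = l * (1 - π n) := by ring
        refine le_antisymm ?_ (le_inf hc0 (hu0 n))
        calc c ⊓ u n ≤ (l * (1 - π n)) ⊓ u n := inf_le_inf_right _ h2
          _ = 0 := h1
      set d : L := c ⊓ 1 with hd
      have hd0 : 0 ≤ d := le_inf hc0 hone
      have hd1 : d ≤ 1 := inf_le_right
      have h4 : ∀ n : ℕ, (d + m) ⊓ (n • (1 : L)) ≤ m := by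
        intro n
        have hdu : d ⊓ u n = 0 := by
          refine le_antisymm ?_ (le_inf hd0 (hu0 n))
          calc d ⊓ u n ≤ c ⊓ u n := inf_le_inf_right _ inf_le_left
            _ = 0 := hcu n
        exact inf_shift n hdu
      have h5 : ∀ n : ℕ, n • d ≤ m := nsmul_le_of_inf hd0 hd1 hm0 h4
      have h6 : d = 0 := le_antisymm (arch hd0 h5) hd0
      have h7 : c = 0 := weak_unit hc0 h6
      have h8 : b ⊓ l = l := by
        have := sub_eq_zero.mp h7
        exact this.symm
      calc l = b ⊓ l := h8.symm
        _ ≤ b := inf_le_left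
end

section
/- Let L be a Dedekind complete unital f-algebra and X a partially ordered L-module. Then X is sequentially Archimedean if and only if X is both sequentially ℝ-Archimedean and sequentially P-Archimedean. -/
/-- X is sequentially S-Archimedean: for every sequence in S decreasing to 0 in L
and every x ≥ 0 in X, the sequence (λ n • x) has infimum 0 in X. -/
def SeqSArchimedean (L X : Type*) [DFAlgebra L] [POModule L X] (S : Set L) : Prop :=
  ∀ l : ℕ → L, (∀ n, l n ∈ S) → Antitone l → IsGLB (Set.range l) 0 →
    ∀ x : X, 0 ≤ x → IsGLB (Set.range fun n => l n • x) 0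

namespace Stmt6Aux

variable {L : Type*} [DFAlgebra L]

instance (priority := 100) : IsOrderedAddMonoid L :=
  { add_le_add_left := fun a b h c => by
      simpa only [add_comm] using DFAlgebra.add_le_add_left a b h c }

/-- The ordered group structure on a PO module (not an instance since `L` is not
determined by `X`). -/
def xgroup (L X : Type*) [DFAlgebra L] [POModule L X] : IsOrderedAddMonoid X :=
  { add_le_add_left := fun a b h c => by
      simpa only [add_comm] using POModule.add_le_add_left (L := L) a b h c }

lemma one_nn : (0 : L) ≤ 1 := by
  simpa using DFAlgebra.algebraMap_nonneg (L := L) 1 zero_le_one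

lemma amap_mono {r s : ℝ} (h : r ≤ s) : algebraMap ℝ L r ≤ algebraMap ℝ L s := by
  have h1 := DFAlgebra.algebraMap_nonneg (L := L) (s - r) (by linarith)
  rw [map_sub, sub_nonneg] at h1
  exact h1

/-- A distributivity-style inequality for positive elements. -/
lemma inf_add_le3 {a b c : L} (hd : 0 ≤ a ⊓ b) (hc : 0 ≤ c) :
    a ⊓ (b + c) ≤ a ⊓ b + a ⊓ c := by
  have step1 : a ⊓ (b + c) ≤ a ⊓ b + c := by
    rw [inf_add]
    exact le_inf (le_trans inf_le_left (le_add_of_nonneg_right hc)) inf_le_right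
  have step2 : a ⊓ (b + c) ≤ a ⊓ (a ⊓ b + c) := le_inf inf_le_left step1
  refine step2.trans ?_
  rw [add_inf]
  exact le_inf (inf_le_left.trans (le_add_of_nonneg_left hd)) inf_le_right

lemma disj_nsmul {a b : L} (h : a ⊓ b = 0) (n : ℕ) : a ⊓ n • b = 0 := by
  have ha : 0 ≤ a := by rw [← h]; exact inf_le_left
  have hb : 0 ≤ b := by rw [← h]; exact inf_le_right
  induction n with
  | zero => rw [zero_nsmul]; exact inf_eq_right.mpr ha
  | succ n ih =>
    have h1 : a ⊓ ((n + 1) • b) ≤ a ⊓ (n • b) + a ⊓ b := by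
      rw [succ_nsmul]
      exact inf_add_le3 ih.ge hb
    rw [ih, h, add_zero] at h1
    have h2 : 0 ≤ a ⊓ ((n + 1) • b) := le_inf ha (nsmul_nonneg hb _)
    exact le_antisymm h1 h2

lemma arch {t u : L} (ht : 0 ≤ t) (h : ∀ n : ℕ, n • t ≤ u) : t ≤ 0 := by
  obtain ⟨s, hs⟩ := DFAlgebra.dedekind (Set.range fun n : ℕ => n • t)
    ⟨0 • t, ⟨0, rfl⟩⟩ ⟨u, by rintro _ ⟨n, rfl⟩; exact h n⟩
  have h2 : s ≤ s - t := by
    refine hs.2 ?_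
    rintro _ ⟨n, rfl⟩
    have h3 : (n + 1) • t ≤ s := hs.1 ⟨n + 1, rfl⟩
    rw [succ_nsmul] at h3
    exact le_sub_iff_add_le.mpr h3
  exact (le_sub_self_iff s).mp h2

lemma bounded_of_inf_le {t : L} (ht : 0 ≤ t) (h : ∀ k : ℕ, t ⊓ (k • t - 1) ≤ 0) :
    t = 0 := by
  have key : ∀ k : ℕ, k • t ≤ 1 + t := by
    intro k
    induction k with
    | zero => rw [zero_nsmul]; exact add_nonneg one_nn ht
    | succ k ih =>
      have h2 : t ⊔ (k • t - 1) ≤ t :=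
        sup_le le_rfl (sub_le_iff_le_add.mpr (ih.trans_eq (add_comm 1 t)))
      have h1 : t + (k • t - 1) ≤ 0 + t := by
        rw [← inf_add_sup t (k • t - 1)]
        exact add_le_add (h k) h2
      have h3 : (k + 1) • t - 1 ≤ t := by
        calc (k + 1) • t - 1 = t + (k • t - 1) := by rw [succ_nsmul]; abel
          _ ≤ 0 + t := h1
          _ = t := zero_add t
      exact (sub_le_iff_le_add.mp h3).trans_eq (add_comm t 1)
  exact le_antisymm (arch ht key) ht

lemma disj_mul_zero {a b : L} (h : a ⊓ b = 0) : a * b = 0 := by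
  have ha : 0 ≤ a := by rw [← h]; exact inf_le_left
  have hb : 0 ≤ b := by rw [← h]; exact inf_le_right
  have h1 : (a * b) ⊓ a = 0 := DFAlgebra.f_prop b a a (by rwa [inf_comm]) ha
  have h2 : (b * a) ⊓ (a * b) = 0 :=
    DFAlgebra.f_prop a (a * b) b (by rwa [inf_comm] at h1) hb
  rw [mul_comm b a, inf_idem] at h2
  exact h2

/-- The component of the unit in the band generated by `b`. -/
noncomputable def comp (b : L) : L :=
  (DFAlgebra.dedekind (Set.range fun k : ℕ => 1 ⊓ k • b) ⟨_, ⟨0, rfl⟩⟩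
    ⟨1, by rintro _ ⟨k, rfl⟩; exact inf_le_left⟩).choose

lemma comp_isLUB (b : L) : IsLUB (Set.range fun k : ℕ => 1 ⊓ k • b) (comp b) :=
  (DFAlgebra.dedekind (Set.range fun k : ℕ => 1 ⊓ k • b) ⟨_, ⟨0, rfl⟩⟩
    ⟨1, by rintro _ ⟨k, rfl⟩; exact inf_le_left⟩).choose_spec

lemma comp_nonneg {b : L} (hb : 0 ≤ b) : 0 ≤ comp b := by
  have h1 : (1 : L) ⊓ (0 : ℕ) • b ≤ comp b := (comp_isLUB b).1 ⟨0, rfl⟩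
  have h0 : (1 : L) ⊓ (0 : ℕ) • b = 0 := by
    rw [zero_nsmul]; exact inf_eq_right.mpr one_nn
  rwa [h0] at h1

lemma comp_le_one (b : L) : comp b ≤ 1 :=
  (comp_isLUB b).2 (by rintro _ ⟨k, rfl⟩; exact inf_le_left)

lemma comp_mono {b b' : L} (h : b ≤ b') : comp b ≤ comp b' := by
  refine (comp_isLUB b).2 ?_
  rintro _ ⟨k, rfl⟩
  exact le_trans (inf_le_inf_left _ (nsmul_le_nsmul_right h k))
    ((comp_isLUB b').1 ⟨k, rfl⟩)

lemma disj_comp {b c : L} (hb : 0 ≤ b) (hc : c ⊓ b = 0) : c ⊓ comp b = 0 := by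
  have hc0 : 0 ≤ c := by rw [← hc]; exact inf_le_left
  have hge : 0 ≤ c ⊓ comp b := le_inf hc0 (comp_nonneg hb)
  have hub : comp b ≤ (c ⊔ comp b) - c := by
    refine (comp_isLUB b).2 ?_
    rintro _ ⟨k, rfl⟩
    have hy : c ⊓ (1 ⊓ k • b) = 0 := by
      refine le_antisymm ?_ (le_inf hc0 (le_inf one_nn (nsmul_nonneg hb k)))
      exact le_trans (inf_le_inf_left c inf_le_right) (disj_nsmul hc k).le
    have h1 : c ⊓ (1 ⊓ k • b) + c ⊔ (1 ⊓ k • b) = c + (1 ⊓ k • b) :=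
      inf_add_sup _ _
    rw [hy, zero_add] at h1
    have h2 : c ⊔ (1 ⊓ k • b) ≤ c ⊔ comp b :=
      sup_le_sup_left ((comp_isLUB b).1 ⟨k, rfl⟩) c
    calc (1 : L) ⊓ k • b = (c ⊔ (1 ⊓ k • b)) - c := by rw [h1]; abel
      _ ≤ (c ⊔ comp b) - c := sub_le_sub_right h2 c
  have h3 : c ⊓ comp b + c ⊔ comp b = c + comp b := inf_add_sup _ _
  have h4 : c + comp b ≤ c + ((c ⊔ comp b) - c) := add_le_add_right hub c
  have h5 : c ⊓ comp b ≤ 0 := by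
    have h6 : c ⊓ comp b + c ⊔ comp b ≤ c ⊔ comp b := by
      rw [h3]
      calc c + comp b ≤ c + ((c ⊔ comp b) - c) := h4
        _ = c ⊔ comp b := by abel
    exact (add_le_iff_nonpos_left).mp h6
  exact le_antisymm h5 hge

lemma comp_disj {b : L} (hb : 0 ≤ b) : b ⊓ (1 - comp b) = 0 := by
  have hq : 0 ≤ 1 - comp b := sub_nonneg.mpr (comp_le_one b)
  have ht : 0 ≤ b ⊓ (1 - comp b) := le_inf hb hq
  refine bounded_of_inf_le ht ?_
  intro k
  set t := b ⊓ (1 - comp b) with htdef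
  have h1 : t ≤ 1 - (1 ⊓ k • b) := by
    have hk := (comp_isLUB b).1 ⟨k, rfl⟩
    exact le_trans inf_le_right (sub_le_sub_left hk 1)
  have h1' : t ≤ (1 - k • b) ⊔ 0 := by
    rw [sub_inf, sub_self] at h1
    rwa [sup_comm] at h1
  have h2 : k • t - 1 ≤ (k • b - 1) ⊔ 0 :=
    le_trans (sub_le_sub_right (nsmul_le_nsmul_right inf_le_left k) 1) le_sup_left
  have h3 : ((k • b - 1) ⊔ 0) ⊓ ((1 - k • b) ⊔ 0) = 0 := by
    have h4 := posPart_inf_negPart_eq_zero (k • b - 1)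
    simpa [posPart_def, negPart_def, neg_sub] using h4
  calc t ⊓ (k • t - 1) ≤ ((1 - k • b) ⊔ 0) ⊓ ((k • b - 1) ⊔ 0) := inf_le_inf h1' h2
    _ = 0 := by rw [inf_comm]; exact h3

lemma comp_idem {b : L} (hb : 0 ≤ b) : comp b * comp b = comp b := by
  have hd : (1 - comp b) ⊓ b = 0 := by rw [inf_comm]; exact comp_disj hb
  have hd2 : (1 - comp b) ⊓ comp b = 0 := disj_comp hb hd
  have h1 : (1 - comp b) * comp b = 0 := disj_mul_zero hd2
  have h2 : comp b - comp b * comp b = 0 := by rw [← h1]; ring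
  have := sub_eq_zero.mp h2
  exact this.symm

lemma disj_amap_mul {c p : L} (hp : 0 ≤ p) (h : c ⊓ p = 0) {ε : ℝ} (hε : 0 ≤ ε) :
    c ⊓ (algebraMap ℝ L ε * p) = 0 := by
  set n := ⌈ε⌉₊ with hn
  have hεn : ε ≤ (n : ℝ) := Nat.le_ceil ε
  have h1 : algebraMap ℝ L ε * p ≤ n • p := by
    have h2 : (0 : L) ≤ algebraMap ℝ L ((n : ℝ) - ε) * p :=
      DFAlgebra.mul_nonneg _ _ (DFAlgebra.algebraMap_nonneg _ (by linarith)) hp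
    rw [map_sub, sub_mul, sub_nonneg] at h2
    rw [map_natCast] at h2
    rwa [← nsmul_eq_mul] at h2
  have hc0 : 0 ≤ c := by rw [← h]; exact inf_le_left
  have hge : 0 ≤ c ⊓ (algebraMap ℝ L ε * p) :=
    le_inf hc0 (DFAlgebra.mul_nonneg _ _ (DFAlgebra.algebraMap_nonneg _ hε) hp)
  have hle : c ⊓ (algebraMap ℝ L ε * p) ≤ 0 :=
    le_trans (inf_le_inf_left c h1) (disj_nsmul h n).le
  exact le_antisymm hle hge

section Module

variable {X : Type*} [POModule L X]

lemma smul_nn {a : L} {x : X} (ha : 0 ≤ a) (hx : 0 ≤ x) : 0 ≤ a • x := by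
  have h := POModule.smul_le_smul a ha 0 x hx
  rwa [smul_zero] at h

lemma smul_mono_scalar {a b : L} {x : X} (h : a ≤ b) (hx : 0 ≤ x) :
    a • x ≤ b • x := by
  letI := xgroup L X
  have h1 : 0 ≤ (b - a) • x := smul_nn (sub_nonneg.mpr h) hx
  rw [sub_smul] at h1
  exact sub_nonneg.mp h1

end Module

end Stmt6Aux

open Stmt6Aux in
/-- X is sequentially Archimedean iff X is sequentially ℝ-Archimedean and
sequentially P-Archimedean. -/
theorem stmt6 (L X : Type*) [DFAlgebra L] [POModule L X] :
    SeqSArchimedean L X Set.univ ↔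
      SeqSArchimedean L X {l : L | ∃ r : ℝ, l = algebraMap ℝ L r} ∧
        SeqSArchimedean L X {π : L | π * π = π} := by
  letI := xgroup L X
  constructor
  · intro h
    exact ⟨fun l _ ha hg => h l (fun n => Set.mem_univ _) ha hg,
      fun l _ ha hg => h l (fun n => Set.mem_univ _) ha hg⟩
  · rintro ⟨hR, hP⟩ l - hanti hglb x hx
    have hlnn : ∀ n, (0 : L) ≤ l n := fun n => hglb.1 ⟨n, rfl⟩
    constructor
    · rintro _ ⟨n, rfl⟩
      exact smul_nn (hlnn n) hx
    · intro b hb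
      have key : ∀ ε : ℝ, 0 < ε → b ≤ (algebraMap ℝ L ε) • x := by
        intro ε hε
        set e : L := algebraMap ℝ L ε with he
        have henn : 0 ≤ e := DFAlgebra.algebraMap_nonneg ε hε.le
        set bb : ℕ → L := fun n => (l n - e) ⊔ 0 with hbbdef
        have hbbnn : ∀ n, 0 ≤ bb n := fun n => le_sup_right
        set p : ℕ → L := fun n => comp (bb n) with hpdef
        have hbb0 : ∀ n, bb n ≤ l 0 := fun n =>
          sup_le (le_trans (sub_le_self _ henn) (hanti (Nat.zero_le n))) (hlnn 0)
        -- scalar estimate : l n ≤ e + p n * l 0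
        have hscal : ∀ n, l n ≤ e + p n * l 0 := by
          intro n
          have hz : bb n * (1 - p n) = 0 := disj_mul_zero (comp_disj (hbbnn n))
          have hbbp : bb n = bb n * p n := by
            have h1 : bb n * 1 - bb n * p n = 0 := by rw [← mul_sub]; exact hz
            rw [mul_one] at h1
            exact sub_eq_zero.mp h1
          have h1 : bb n * p n ≤ l 0 * p n := by
            have h2 := DFAlgebra.mul_nonneg (l 0 - bb n) (p n)
              (sub_nonneg.mpr (hbb0 n)) (comp_nonneg (hbbnn n))
            rw [sub_mul, sub_nonneg] at h2
            exact h2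
          calc l n = e + (l n - e) := by ring
            _ ≤ e + bb n := add_le_add_right le_sup_left e
            _ = e + bb n * p n := by rw [← hbbp]
            _ ≤ e + l 0 * p n := add_le_add_right h1 e
            _ = e + p n * l 0 := by rw [mul_comm]
        -- p is a sequence of idempotents decreasing to 0
        have hpglb : IsGLB (Set.range p) 0 := by
          constructor
          · rintro _ ⟨n, rfl⟩
            exact comp_nonneg (hbbnn n)
          · intro c hc
            have hεp : ∀ n, e * p n ≤ l n := by
              intro n
              set c' : L := (e - l n) ⊔ 0 with hc'def
              have hdisj : c' ⊓ bb n = 0 := by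
                have h4 := posPart_inf_negPart_eq_zero (l n - e)
                rw [posPart_def, negPart_def, neg_sub] at h4
                rw [hc'def]
                show ((e - l n) ⊔ 0) ⊓ bb n = 0
                rw [hbbdef]
                rw [inf_comm]
                exact h4
              have hd2 : c' ⊓ (e * p n) = 0 :=
                disj_amap_mul (comp_nonneg (hbbnn n)) (disj_comp (hbbnn n) hdisj) hε.le
              have hsum : c' + e * p n = c' ⊔ (e * p n) := by
                rw [← inf_add_sup c' (e * p n), hd2, zero_add]
              have hc'le : c' ≤ e := sup_le (sub_le_self e (hlnn n)) henn
              have hple : e * p n ≤ e := by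
                have h5 := DFAlgebra.mul_nonneg e (1 - p n) henn
                  (sub_nonneg.mpr (comp_le_one (bb n)))
                rw [mul_sub, mul_one, sub_nonneg] at h5
                exact h5
              have h4 : c' + e * p n ≤ e := by
                rw [hsum]; exact sup_le hc'le hple
              have h5 : e - l n ≤ c' := le_sup_left
              calc e * p n ≤ e - c' :=
                    le_sub_iff_add_le.mpr (by rwa [add_comm] at h4)
                _ ≤ e - (e - l n) := sub_le_sub_left h5 e
                _ = l n := by ring
            have hec : ∀ n, e * c ≤ l n := by
              intro n
              have h6 := DFAlgebra.mul_nonneg e (p n - c) henn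
                (sub_nonneg.mpr (hc ⟨n, rfl⟩))
              rw [mul_sub, sub_nonneg] at h6
              exact le_trans h6 (hεp n)
            have h6 : e * c ≤ 0 := hglb.2 (by rintro _ ⟨n, rfl⟩; exact hec n)
            have h7 : (0 : L) ≤ algebraMap ℝ L (1 / ε) * (-(e * c)) :=
              DFAlgebra.mul_nonneg _ _
                (DFAlgebra.algebraMap_nonneg _ (by positivity)) (neg_nonneg.mpr h6)
            have h8 : algebraMap ℝ L (1 / ε) * (e * c) = c := by
              rw [he, ← mul_assoc, ← map_mul, one_div, inv_mul_cancel₀ hε.ne',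
                map_one, one_mul]
            rw [mul_neg, h8] at h7
            exact neg_nonneg.mp h7
        have hpanti : Antitone p := fun m n h =>
          comp_mono (sup_le_sup_right (sub_le_sub_right (hanti h) e) 0)
        have h9 := hP p (fun n => comp_idem (hbbnn n)) hpanti hpglb (l 0 • x)
          (smul_nn (hlnn 0) hx)
        have h10 : b - e • x ≤ 0 := by
          refine h9.2 ?_
          rintro _ ⟨n, rfl⟩
          have h11 : b ≤ (e + p n * l 0) • x :=
            le_trans (hb ⟨n, rfl⟩) (smul_mono_scalar (hscal n) hx)
          rw [add_smul, mul_smul] at h11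
          exact sub_le_iff_le_add'.mpr h11
        exact sub_nonpos.mp h10
      -- now use the real sequence 1/(n+1)
      set l' : ℕ → L := fun n => algebraMap ℝ L (1 / (n + 1)) with hl'def
      have hanti' : Antitone l' := by
        intro m n h
        refine amap_mono ?_
        have hm : (0 : ℝ) < m + 1 := by positivity
        have hmn : (m : ℝ) + 1 ≤ (n : ℝ) + 1 := by
          have : (m : ℝ) ≤ n := by exact_mod_cast h
          linarith
        exact one_div_le_one_div_of_le hm hmn
      have hglb' : IsGLB (Set.range l') 0 := by
        constructor
        · rintro _ ⟨n, rfl⟩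
          exact DFAlgebra.algebraMap_nonneg _ (by positivity)
        · intro c hc
          have ht : (0 : L) ≤ c ⊔ 0 := le_sup_right
          have hbound : ∀ m : ℕ, m • (c ⊔ 0) ≤ 1 := by
            intro m
            cases m with
            | zero => rw [zero_nsmul]; exact one_nn
            | succ k =>
              have h1 : c ⊔ 0 ≤ l' k :=
                sup_le (hc ⟨k, rfl⟩) (DFAlgebra.algebraMap_nonneg _ (by positivity))
              have h2 : (k + 1) • (c ⊔ 0) ≤ (k + 1) • l' k :=
                nsmul_le_nsmul_right h1 (k + 1)
              have h3 : (k + 1) • l' k = 1 := by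
                rw [hl'def]
                show (k + 1) • algebraMap ℝ L (1 / ((k : ℝ) + 1)) = 1
                rw [← map_nsmul]
                have h4 : (k + 1) • (1 / ((k : ℝ) + 1)) = 1 := by
                  rw [nsmul_eq_mul]
                  push_cast
                  field_simp
                rw [h4, map_one]
              rwa [h3] at h2
          have h4 : c ⊔ 0 ≤ 0 := arch ht hbound
          exact le_trans le_sup_left h4
      have h12 := hR l' (fun n => ⟨_, rfl⟩) hanti' hglb' x hx
      refine h12.2 ?_
      rintro _ ⟨n, rfl⟩
      exact key (1 / (n + 1)) (by positivity)
end

section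
/- Let L = ℓ^∞ and X = ℓ^∞/c₀ as an L-module. Then X is not support-attaining: the equivalence class x of the constant sequence 1 satisfies π_x = 0 but x ≠ 0, where π_x = inf{π idempotent in ℓ^∞ : πx = x}. -/
open Filter BoundedContinuousFunction

/-- The sequences converging to 0, as a submodule of ℓ^∞ = ℕ →ᵇ ℝ over itself. -/
noncomputable def czero : Submodule (ℕ →ᵇ ℝ) (ℕ →ᵇ ℝ) where
  carrier := {f | Tendsto (fun n => f n) atTop (nhds 0)}
  zero_mem' := by simp only [Set.mem_setOf_eq]; exact (tendsto_const_nhds : Tendsto (fun _ : ℕ => (0 : ℝ)) atTop (nhds 0))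
  add_mem' := by
    intro f g hf hg
    simpa using (hf.add hg)
  smul_mem' := by
    intro c f hf
    have h1 : Tendsto (fun n => ‖c‖ * ‖f n‖) atTop (nhds 0) := by
      simpa using hf.norm.const_mul ‖c‖
    have : Tendsto (fun n => c n * f n) atTop (nhds 0) := by
      apply squeeze_zero_norm _ h1
      intro n
      calc ‖c n * f n‖ = ‖c n‖ * ‖f n‖ := norm_mul _ _
        _ ≤ ‖c‖ * ‖f n‖ :=
          mul_le_mul_of_nonneg_right (c.norm_coe_le_norm n) (norm_nonneg _)
    simpa [smul_eq_mul] using this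


/-- Indicator of `{k | n ≤ k}` as a bounded function. -/
noncomputable def indic (n : ℕ) : ℕ →ᵇ ℝ :=
  BoundedContinuousFunction.mkOfBound
    ⟨fun k => if n ≤ k then 1 else 0, continuous_of_discreteTopology⟩ 2 (by
      intro x y
      dsimp
      split <;> split <;> simp [Real.dist_eq] <;> norm_num)

/-- ℓ^∞/c₀ is not support-attaining: the class x of the constant sequence 1
satisfies π_x = 0 (the set of idempotents π with π x = x has infimum 0 in ℓ^∞)
yet x ≠ 0. -/
theorem stmt9 :
    (Submodule.Quotient.mk (p := czero) (1 : ℕ →ᵇ ℝ)) ≠ 0 ∧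
    IsGLB {π : ℕ →ᵇ ℝ | π * π = π ∧
        π • (Submodule.Quotient.mk (p := czero) (1 : ℕ →ᵇ ℝ)) =
          Submodule.Quotient.mk (p := czero) (1 : ℕ →ᵇ ℝ)} 0 := by
  constructor
  · intro h
    rw [Submodule.Quotient.mk_eq_zero] at h
    have h1 : Tendsto (fun n => ((1 : ℕ →ᵇ ℝ) n : ℝ)) atTop (nhds 0) := h
    have h2 : Tendsto (fun _ : ℕ => (1 : ℝ)) atTop (nhds 0) := by simpa using h1
    have := tendsto_nhds_unique h2 tendsto_const_nhds
    norm_num at this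
  · constructor
    · intro π hπ
      obtain ⟨hid, -⟩ := hπ
      intro n
      have : π n * π n = π n := by
        have := congrArg (fun f : ℕ →ᵇ ℝ => f n) hid
        simpa using this
      have : (0 : ℝ) ≤ π n := by
        rw [← this]; exact mul_self_nonneg _
      simpa using this
    · intro b hb
      intro k
      have hmem : indic (k + 1) ∈ {π : ℕ →ᵇ ℝ | π * π = π ∧
          π • (Submodule.Quotient.mk (p := czero) (1 : ℕ →ᵇ ℝ)) =
            Submodule.Quotient.mk (p := czero) (1 : ℕ →ᵇ ℝ)} := by
        constructor
        · ext m
          simp only [BoundedContinuousFunction.coe_mul, Pi.mul_apply]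
          show (if k + 1 ≤ m then (1:ℝ) else 0) * (if k + 1 ≤ m then 1 else 0)
              = (if k + 1 ≤ m then 1 else 0)
          split <;> norm_num
        · rw [← Submodule.Quotient.mk_smul, Submodule.Quotient.eq]
          show Tendsto (fun m => ((indic (k+1) • (1 : ℕ →ᵇ ℝ) - 1) m : ℝ)) atTop (nhds 0)
          have : ∀ m, k + 1 ≤ m → ((indic (k+1) • (1 : ℕ →ᵇ ℝ) - 1) m : ℝ) = 0 := by
            intro m hm
            simp [indic, smul_eq_mul, hm, (by omega : k < m)]
          refine Tendsto.congr' ?_ tendsto_const_nhds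
          filter_upwards [eventually_atTop.2 ⟨k + 1, fun m hm => this m hm⟩] with m hm
          exact hm.symm
      have hbk : b ≤ indic (k + 1) := hb hmem
      have := hbk k
      have h0 : (indic (k+1)) k = 0 := by simp [indic]
      simpa [h0] using this
end

section
/- Let X and Y be directed partially ordered L-modules over a Dedekind complete unital f-algebra L, with Y sequentially almost Archimedean, and let T : X⁺ → Y⁺ be additive (T(x+y) = T(x)+T(y)) and P-homogeneous (T(πx) = πT(x) for every idempotent π of L). Then T extends uniquely to a positive L-module homomorphism from X to Y. -/
section LFacts
variable {L : Type*} [DFAlgebra L]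

instance covL : CovariantClass L L (· + ·) (· ≤ ·) :=
  ⟨fun c a b h => DFAlgebra.add_le_add_left a b h c⟩
instance covL' : CovariantClass L L (Function.swap (· + ·)) (· ≤ ·) :=
  ⟨fun c a b h => by simpa [add_comm] using DFAlgebra.add_le_add_left a b h c⟩

lemma Lmul_nonneg {a b : L} (ha : 0 ≤ a) (hb : 0 ≤ b) : 0 ≤ a * b :=
  DFAlgebra.mul_nonneg a b ha hb

lemma Lone_nonneg : (0:L) ≤ 1 := by
  have := DFAlgebra.algebraMap_nonneg (L := L) 1 zero_le_one
  simpa using this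

lemma Lmul_le_mul_left {a b : L} (h : a ≤ b) {c : L} (hc : 0 ≤ c) : c * a ≤ c * b := by
  have : 0 ≤ c * (b - a) := Lmul_nonneg hc (sub_nonneg.mpr h)
  rw [mul_sub] at this
  exact sub_nonneg.mp this

lemma Lmul_nonpos {a b : L} (ha : 0 ≤ a) (hb : b ≤ 0) : a * b ≤ 0 := by
  have : 0 ≤ a * (-b) := Lmul_nonneg ha (neg_nonneg.mpr hb)
  rw [mul_neg] at this
  exact neg_nonneg.mp this

lemma Lmul_nonpos' {a b : L} (ha : a ≤ 0) (hb : 0 ≤ b) : a * b ≤ 0 := by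
  rw [mul_comm]; exact Lmul_nonpos hb ha

end LFacts
section LFacts2
variable {L : Type*} [DFAlgebra L]

lemma Ldisj_nonneg_left {u v : L} (h : u ⊓ v = 0) : 0 ≤ u :=
  le_of_eq_of_le h.symm inf_le_left
lemma Ldisj_nonneg_right {u v : L} (h : u ⊓ v = 0) : 0 ≤ v :=
  le_of_eq_of_le h.symm inf_le_right

lemma Lmul_le_mul_left' {L : Type*} [DFAlgebra L] {a b c : L} (h : a ≤ b) (hc : 0 ≤ c) :
    a * c ≤ b * c := by
  rw [mul_comm a c, mul_comm b c]; exact Lmul_le_mul_left h hc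

lemma Lnatcast_nonneg {L : Type*} [DFAlgebra L] (n : ℕ) : (0:L) ≤ (n : L) := by
  rw [← map_natCast (algebraMap ℝ L)]
  exact DFAlgebra.algebraMap_nonneg _ (Nat.cast_nonneg n)

lemma Lnatcast_mono {L : Type*} [DFAlgebra L] {j k : ℕ} (h : j ≤ k) : (j : L) ≤ (k : L) := by
  have h1 : (0:L) ≤ ((k - j : ℕ) : L) := Lnatcast_nonneg _
  rw [Nat.cast_sub h] at h1
  exact sub_nonneg.mp h1

/-- In an f-ring, disjoint elements multiply to zero. -/
lemma Ldisj_mul {u v : L} (h : u ⊓ v = 0) : u * v = 0 := by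
  have h1 : (v * u) ⊓ v = 0 := DFAlgebra.f_prop u v v h (Ldisj_nonneg_right h)
  have h2 : (u * v) ⊓ (v * u) = 0 :=
    DFAlgebra.f_prop v (v * u) u (by rwa [inf_comm] at h1) (Ldisj_nonneg_left h)
  rw [mul_comm v u, inf_idem] at h2
  exact h2

/-- Disjointness is additive. -/
lemma Ldisj_add {x y z : L} (hy : x ⊓ y = 0) (hz : x ⊓ z = 0) : x ⊓ (y + z) = 0 := by
  have hx : 0 ≤ x := Ldisj_nonneg_left hy
  have hy' : 0 ≤ y := Ldisj_nonneg_right hy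
  have hz' : 0 ≤ z := Ldisj_nonneg_right hz
  refine le_antisymm ?_ (le_inf hx (add_nonneg hy' hz'))
  set w := x ⊓ (y + z) with hw
  have h1 : w - x ⊓ y ≤ x ⊓ z := by
    have e1 : w - x ⊓ y = (w - x) ⊔ (w - y) := by
      rw [sub_eq_add_neg, neg_inf, add_sup, ← sub_eq_add_neg, ← sub_eq_add_neg]
    rw [e1]
    have hwx : w ≤ x := inf_le_left
    have hwyz : w ≤ y + z := inf_le_right
    refine sup_le (le_inf ?_ ?_) (le_inf ?_ ?_)
    · exact le_trans (sub_nonpos.mpr hwx) hx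
    · exact le_trans (sub_nonpos.mpr hwx) hz'
    · exact le_trans (sub_le_self w hy') hwx
    · exact sub_le_iff_le_add'.mpr hwyz
  rw [hy, sub_zero, hz] at h1
  exact h1

lemma Ldisj_nsmul {x y : L} (h : x ⊓ y = 0) (n : ℕ) : x ⊓ (n • y) = 0 := by
  induction n with
  | zero => simpa using le_antisymm inf_le_right (le_inf (Ldisj_nonneg_left h) le_rfl)
  | succ n ih => rw [succ_nsmul]; exact Ldisj_add ih h

end LFacts2
section LFacts3
variable {L : Type*} [DFAlgebra L]

/-- Infima distribute over suprema in a lattice-ordered group. -/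
lemma LisLUB_inf {S : Set L} {a : L} (h : IsLUB S a) (c : L) :
    IsLUB ((fun s => s ⊓ c) '' S) (a ⊓ c) := by
  constructor
  · rintro _ ⟨s, hs, rfl⟩
    exact inf_le_inf_right c (h.1 hs)
  · intro b hb
    have key : ∀ s ∈ S, s ≤ b + (a ⊔ c) - c := by
      intro s hs
      have h1 : s ⊓ c + s ⊔ c = s + c := inf_add_sup s c
      have h2 : s ⊓ c ≤ b := hb ⟨s, hs, rfl⟩
      have h3 : s ⊔ c ≤ a ⊔ c := sup_le_sup_right (h.1 hs) c
      have : s + c ≤ b + (a ⊔ c) := by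
        calc s + c = s ⊓ c + s ⊔ c := h1.symm
        _ ≤ b + (a ⊔ c) := add_le_add h2 h3
      exact le_sub_iff_add_le.mpr this
    have ha : a ≤ b + (a ⊔ c) - c := h.2 key
    have h4 : a ⊓ c + a ⊔ c = a + c := inf_add_sup a c
    have : a ⊓ c = a + c - a ⊔ c := eq_sub_of_add_eq h4
    rw [this]
    calc a + c - a ⊔ c ≤ (b + (a ⊔ c) - c) + c - a ⊔ c := by
          exact sub_le_sub_right (add_le_add_left ha c) _
    _ = b := by abel

lemma LisLUB_add {S : Set L} {a : L} (h : IsLUB S a) (c : L) :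
    IsLUB ((fun s => c + s) '' S) (c + a) := by
  constructor
  · rintro _ ⟨s, hs, rfl⟩
    exact add_le_add_right (h.1 hs) c
  · intro b hb
    have : ∀ s ∈ S, s ≤ b - c := fun s hs => le_sub_iff_add_le'.mpr (hb ⟨s, hs, rfl⟩)
    have := h.2 this
    exact add_le_of_le_sub_left this

/-- Archimedean property from Dedekind completeness. -/
lemma Larch {b c : L} (h : ∀ n : ℕ, n • b ≤ c) : b ≤ 0 := by
  obtain ⟨a, ha⟩ := DFAlgebra.dedekind (Set.range fun n : ℕ => n • b)
    ⟨0, 0, zero_smul ℕ b⟩ ⟨c, by rintro _ ⟨n, rfl⟩; exact h n⟩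
  have hub : ∀ n : ℕ, n • b ≤ a - b := by
    intro n
    have : (n + 1) • b ≤ a := ha.1 ⟨n + 1, rfl⟩
    rw [succ_nsmul] at this
    exact le_sub_iff_add_le.mpr this
  have : a ≤ a - b := ha.2 (by rintro _ ⟨n, rfl⟩; exact hub n)
  have h2 := sub_nonneg.mpr this
  rw [sub_sub_cancel_left] at h2
  exact neg_nonneg.mp h2

/-- positive and negative parts. -/
lemma Lpos_sub_neg (a : L) : a ⊔ 0 - (-a) ⊔ 0 = a := by
  rw [sub_eq_add_neg, neg_sup, neg_neg, neg_zero, add_comm, inf_add_sup, add_zero]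

lemma Lpos_inf_neg (a : L) : (a ⊔ 0) ⊓ ((-a) ⊔ 0) = 0 := by
  have h1 : a ⊔ 0 = a + ((-a) ⊔ 0) := by
    exact sub_eq_iff_eq_add.mp (Lpos_sub_neg a)
  have h2 : a ⊓ 0 = -((-a) ⊔ 0) := by rw [neg_sup, neg_neg, neg_zero]
  calc (a ⊔ 0) ⊓ ((-a) ⊔ 0) = (a + ((-a) ⊔ 0)) ⊓ (0 + ((-a) ⊔ 0)) := by rw [← h1, zero_add]
  _ = a ⊓ 0 + ((-a) ⊔ 0) := by
      rw [add_comm a _, add_comm (0:L) _, ← add_inf, add_comm]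
  _ = 0 := by rw [h2]; exact neg_add_cancel _

end LFacts3
section Comp
variable {L : Type*} [DFAlgebra L]

lemma Lnsmul_le_nsmul {a b : L} (h : a ≤ b) (n : ℕ) : n • a ≤ n • b := by
  induction n with
  | zero => simp
  | succ n ih => rw [succ_nsmul, succ_nsmul]; exact add_le_add ih h

/-- The component of `1` in the band generated by `u`. -/
noncomputable def Lcomp (u : L) : L :=
  (DFAlgebra.dedekind (Set.range fun n : ℕ => 1 ⊓ n • u)
    ⟨1 ⊓ 0 • u, 0, rfl⟩ ⟨1, by rintro _ ⟨n, rfl⟩; exact inf_le_left⟩).choose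

lemma Lcomp_isLUB (u : L) : IsLUB (Set.range fun n : ℕ => 1 ⊓ n • u) (Lcomp u) :=
  (DFAlgebra.dedekind (Set.range fun n : ℕ => 1 ⊓ n • u)
    ⟨1 ⊓ 0 • u, 0, rfl⟩ ⟨1, by rintro _ ⟨n, rfl⟩; exact inf_le_left⟩).choose_spec

lemma Lcomp_nonneg (u : L) : 0 ≤ Lcomp u := by
  have h0 : (1:L) ⊓ 0 • u = 0 := by
    rw [zero_smul]; exact inf_eq_right.mpr Lone_nonneg
  exact h0 ▸ (Lcomp_isLUB u).1 ⟨0, rfl⟩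

lemma Lcomp_le_one (u : L) : Lcomp u ≤ 1 :=
  (Lcomp_isLUB u).2 (by rintro _ ⟨n, rfl⟩; exact inf_le_left)

lemma Lcomp_mem_le (u : L) (n : ℕ) : 1 ⊓ n • u ≤ Lcomp u := (Lcomp_isLUB u).1 ⟨n, rfl⟩

lemma Lcomp_mono {u v : L} (h : u ≤ v) : Lcomp u ≤ Lcomp v :=
  (Lcomp_isLUB u).2 (by
    rintro _ ⟨n, rfl⟩
    exact le_trans (inf_le_inf_left 1 (Lnsmul_le_nsmul h n)) (Lcomp_mem_le v n))

lemma Lcomp_disj {u : L} (hu : 0 ≤ u) : (1 - Lcomp u) ⊓ u = 0 := by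
  set e := Lcomp u with he
  set d := (1 - e) ⊓ u with hd
  have hd0 : 0 ≤ d := le_inf (sub_nonneg.mpr (Lcomp_le_one u)) hu
  have key : ∀ n : ℕ, (1 ⊓ n • u) + d ≤ e := by
    intro n
    refine le_trans (le_trans (add_le_add le_rfl le_rfl) ?_) (Lcomp_mem_le u (n + 1))
    refine le_inf ?_ ?_
    · calc (1 ⊓ n • u) + d ≤ e + (1 - e) := add_le_add (Lcomp_mem_le u n) inf_le_left
      _ = 1 := by abel
    · calc (1 ⊓ n • u) + d ≤ n • u + u := add_le_add inf_le_right inf_le_right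
      _ = (n + 1) • u := (succ_nsmul u n).symm
  have : e ≤ e - d := (Lcomp_isLUB u).2 (by
    rintro _ ⟨n, rfl⟩; exact le_sub_iff_add_le.mpr (key n))
  have h2 : d ≤ 0 := by
    have := sub_nonneg.mpr this
    rw [sub_sub_cancel_left] at this
    exact neg_nonneg.mp this
  exact le_antisymm h2 hd0

lemma Lcomp_band_disj {u v : L} (h : u ⊓ v = 0) : Lcomp u ⊓ v = 0 := by
  have hv : 0 ≤ v := Ldisj_nonneg_right h
  have hlub := LisLUB_inf (Lcomp_isLUB u) v
  refine le_antisymm (hlub.2 ?_) (le_inf (Lcomp_nonneg u) hv)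
  rintro _ ⟨_, ⟨n, rfl⟩, rfl⟩
  have h1 : (1 ⊓ n • u) ⊓ v ≤ (n • u) ⊓ v := inf_le_inf_right v inf_le_right
  have h2 : u ⊓ v = 0 := h
  have h3 : (n • u) ⊓ v = 0 := by
    rw [inf_comm] at h2 ⊢
    exact Ldisj_nsmul h2 n
  exact le_trans h1 (le_of_eq h3)

lemma Lcomp_compl_disj {u : L} (hu : 0 ≤ u) : Lcomp u ⊓ (1 - Lcomp u) = 0 := by
  have h1 : u ⊓ (1 - Lcomp u) = 0 := by rw [inf_comm]; exact Lcomp_disj hu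
  exact Lcomp_band_disj h1

lemma Lcomp_idem {u : L} (hu : 0 ≤ u) : Lcomp u * Lcomp u = Lcomp u := by
  have h := Ldisj_mul (Lcomp_compl_disj hu)
  rw [mul_sub, mul_one] at h
  exact (sub_eq_zero.mp h).symm

end Comp
section Cut
variable {L : Type*} [DFAlgebra L]

lemma Lcomp_absorb {u v : L} (hu : 0 ≤ u) (h : Lcomp v ≤ Lcomp u) :
    Lcomp u * Lcomp v = Lcomp v := by
  have h1 : (1 - Lcomp u) ⊓ Lcomp v = 0 := by
    refine le_antisymm ?_ (le_inf (sub_nonneg.mpr (Lcomp_le_one u)) (Lcomp_nonneg v))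
    calc (1 - Lcomp u) ⊓ Lcomp v ≤ (1 - Lcomp u) ⊓ Lcomp u := inf_le_inf_left _ h
    _ = 0 := by rw [inf_comm]; exact Lcomp_compl_disj hu
  have h2 := Ldisj_mul h1
  rw [sub_mul, one_mul] at h2
  exact (sub_eq_zero.mp h2).symm

/-- the cut idempotent at level `t`. -/
noncomputable def Lcut (l t : L) : L := Lcomp ((l - t) ⊔ 0)

lemma Lcut_nonneg (l t : L) : 0 ≤ Lcut l t := Lcomp_nonneg _
lemma Lcut_le_one (l t : L) : Lcut l t ≤ 1 := Lcomp_le_one _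
lemma Lcut_idem (l t : L) : Lcut l t * Lcut l t = Lcut l t := Lcomp_idem le_sup_right

lemma Lcut_mono {l t s : L} (h : t ≤ s) : Lcut l s ≤ Lcut l t :=
  Lcomp_mono (sup_le_sup_right (sub_le_sub_left h l) 0)

lemma Lcut_absorb {l t s : L} (h : t ≤ s) : Lcut l t * Lcut l s = Lcut l s :=
  Lcomp_absorb le_sup_right (Lcut_mono h)

/-- on the band of the cut, `l` dominates `t`. -/
lemma Lcut_lower (l t : L) : 0 ≤ (l - t) * Lcut l t := by
  set p := (l - t) ⊔ 0 with hp
  set q := (-(l - t)) ⊔ 0 with hq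
  have hpq : p ⊓ q = 0 := Lpos_inf_neg (l - t)
  have heq : Lcut l t ⊓ q = 0 := Lcomp_band_disj hpq
  have hmul : Lcut l t * q = 0 := Ldisj_mul heq
  have hdec : l - t = p - q := (Lpos_sub_neg (l - t)).symm
  calc (0:L) ≤ p * Lcut l t := Lmul_nonneg le_sup_right (Lcut_nonneg l t)
  _ = p * Lcut l t - Lcut l t * q := by rw [hmul, sub_zero]
  _ = (l - t) * Lcut l t := by rw [hdec]; ring

/-- off the band of the cut, `t` dominates `l`. -/
lemma Lcut_upper (l t : L) : 0 ≤ (t - l) * (1 - Lcut l t) := by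
  set p := (l - t) ⊔ 0 with hp
  set q := (-(l - t)) ⊔ 0 with hq
  have hdisj : (1 - Lcut l t) ⊓ p = 0 := Lcomp_disj le_sup_right
  have hmul : (1 - Lcut l t) * p = 0 := Ldisj_mul hdisj
  have hdec : t - l = q - p := by
    have := Lpos_sub_neg (l - t)
    have h2 : q - p = -(p - q) := by ring
    rw [h2, this]; ring
  calc (0:L) ≤ q * (1 - Lcut l t) :=
        Lmul_nonneg le_sup_right (sub_nonneg.mpr (Lcut_le_one l t))
  _ = q * (1 - Lcut l t) - (1 - Lcut l t) * p := by rw [hmul, sub_zero]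
  _ = (t - l) * (1 - Lcut l t) := by rw [hdec]; ring

end Cut
section Freudenthal
variable {L : Type*} [DFAlgebra L]

/-- the staircase idempotents. -/
noncomputable def Lstair (l δ : L) : ℕ → L := fun k =>
  if k = 0 then 1 else Lcut l ((k : L) * δ)

lemma Lstair_zero (l δ : L) : Lstair l δ 0 = 1 := rfl

lemma Lstair_nonneg (l δ : L) (k : ℕ) : 0 ≤ Lstair l δ k := by
  unfold Lstair; split
  · exact Lone_nonneg
  · exact Lcut_nonneg _ _

lemma Lstair_le_one (l δ : L) (k : ℕ) : Lstair l δ k ≤ 1 := by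
  unfold Lstair; split
  · exact le_rfl
  · exact Lcut_le_one _ _

lemma Lstair_idem (l δ : L) (k : ℕ) : Lstair l δ k * Lstair l δ k = Lstair l δ k := by
  unfold Lstair; split
  · exact mul_one 1
  · exact Lcut_idem _ _

lemma Lstair_absorb {δ : L} (hδ : 0 ≤ δ) (l : L) {j k : ℕ} (h : j ≤ k) :
    Lstair l δ j * Lstair l δ k = Lstair l δ k := by
  rcases Nat.eq_zero_or_pos j with hj | hj
  · rw [hj, Lstair_zero, one_mul]
  · have hk : k ≠ 0 := by omega
    have hj' : j ≠ 0 := by omega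
    unfold Lstair
    rw [if_neg hj', if_neg hk]
    exact Lcut_absorb (Lmul_le_mul_left' (Lnatcast_mono h) hδ)

lemma Lstair_lower {l δ : L} (hl : 0 ≤ l) (k : ℕ) :
    0 ≤ (l - (k : L) * δ) * Lstair l δ k := by
  rcases Nat.eq_zero_or_pos k with hk | hk
  · rw [hk, Lstair_zero]; simpa using hl
  · have hk' : k ≠ 0 := by omega
    unfold Lstair; rw [if_neg hk']
    exact Lcut_lower l _

lemma Lstair_upper (l δ : L) (k : ℕ) :
    0 ≤ ((k : L) * δ - l) * (1 - Lstair l δ k) := by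
  rcases Nat.eq_zero_or_pos k with hk | hk
  · rw [hk, Lstair_zero]; simp
  · have hk' : k ≠ 0 := by omega
    unfold Lstair; rw [if_neg hk']
    exact Lcut_upper l _

lemma Lstair_antitone {l δ : L} (hδ : 0 ≤ δ) : Antitone (Lstair l δ) := by
  refine antitone_nat_of_succ_le fun k => ?_
  rcases Nat.eq_zero_or_pos k with hk | hk
  · rw [hk, Lstair_zero]; exact Lstair_le_one l δ 1
  · have hk' : k ≠ 0 := by omega
    unfold Lstair
    rw [if_neg hk', if_neg (Nat.succ_ne_zero k)]
    exact Lcut_mono (Lmul_le_mul_left' (Lnatcast_mono (Nat.le_succ k)) hδ)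

end Freudenthal
section Freudenthal2
variable {L : Type*} [DFAlgebra L]
open Finset

lemma Lsum_nonneg {ι : Type*} {s : Finset ι} {f : ι → L} (h : ∀ i ∈ s, 0 ≤ f i) :
    0 ≤ ∑ i ∈ s, f i :=
  Finset.sum_induction f (fun x => 0 ≤ x) (fun _ _ => add_nonneg) le_rfl h

lemma Lsum_nonpos {ι : Type*} {s : Finset ι} {f : ι → L} (h : ∀ i ∈ s, f i ≤ 0) :
    ∑ i ∈ s, f i ≤ 0 :=
  Finset.sum_induction f (fun x => x ≤ 0) (fun _ _ => add_nonpos) le_rfl h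

/-- staircase sum. -/
noncomputable def Lsig (l δ : L) (K : ℕ) : L := ∑ k ∈ range K, Lstair l δ (k + 1)

lemma Lsig_nonneg (l δ : L) (K : ℕ) : 0 ≤ Lsig l δ K :=
  Lsum_nonneg fun k _ => Lstair_nonneg l δ (k + 1)

lemma Lsig_mul_piece {δ : L} (hδ : 0 ≤ δ) (l : L) {j K : ℕ} (hj : j ≤ K) :
    Lsig l δ K * (Lstair l δ j - Lstair l δ (j + 1)) =
      (j : L) * (Lstair l δ j - Lstair l δ (j + 1)) := by
  unfold Lsig
  rw [Finset.sum_mul]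
  have hterm : ∀ k ∈ range K, Lstair l δ (k + 1) * (Lstair l δ j - Lstair l δ (j + 1)) =
      if k ∈ range j then (Lstair l δ j - Lstair l δ (j + 1)) else 0 := by
    intro k _
    by_cases h : k ∈ range j
    · have hk : k + 1 ≤ j := Finset.mem_range.mp h
      rw [if_pos h, mul_sub, Lstair_absorb hδ l hk, Lstair_absorb hδ l (hk.trans (Nat.le_succ j))]
    · have hk : j ≤ k := by have := Finset.mem_range.not.mp h; omega
      rw [if_neg h, mul_sub, mul_comm, Lstair_absorb hδ l (hk.trans (Nat.le_succ k)),
        mul_comm, Lstair_absorb hδ l (by omega : j + 1 ≤ k + 1), sub_self]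
  rw [Finset.sum_congr rfl hterm, Finset.sum_ite_mem,
    Finset.inter_eq_right.mpr (Finset.range_subset_range.mpr hj), Finset.sum_const,
    Finset.card_range, nsmul_eq_mul]

lemma Lsig_mul_top {δ : L} (hδ : 0 ≤ δ) (l : L) (K : ℕ) :
    Lsig l δ K * Lstair l δ K = (K : L) * Lstair l δ K := by
  unfold Lsig
  rw [Finset.sum_mul]
  have hterm : ∀ k ∈ range K, Lstair l δ (k + 1) * Lstair l δ K = Lstair l δ K := by
    intro k hk
    exact Lstair_absorb hδ l (Finset.mem_range.mp hk)
  rw [Finset.sum_congr rfl hterm, Finset.sum_const, Finset.card_range, nsmul_eq_mul]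

/-- decomposition of any element against the staircase partition. -/
lemma Ldecomp (l δ c : L) (K : ℕ) :
    c = (∑ j ∈ range K, c * (Lstair l δ j - Lstair l δ (j + 1))) + c * Lstair l δ K := by
  have h1 : ∑ j ∈ range K, c * (Lstair l δ j - Lstair l δ (j + 1)) =
      c * (1 - Lstair l δ K) := by
    rw [← Finset.mul_sum, Finset.sum_range_sub' (fun j => Lstair l δ j), Lstair_zero]
  rw [h1]; ring

lemma Lfreudenthal_low {l δ : L} (hl : 0 ≤ l) (hδ : 0 ≤ δ) (K : ℕ) :
    δ * Lsig l δ K ≤ l := by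
  rw [← sub_nonneg]
  set c := l - δ * Lsig l δ K with hc
  rw [Ldecomp l δ c K]
  refine add_nonneg (Lsum_nonneg fun j hj => ?_) ?_
  · have hjK : j ≤ K := le_of_lt (Finset.mem_range.mp hj)
    have e1 : c * (Lstair l δ j - Lstair l δ (j + 1)) =
        (l - (j : L) * δ) * (Lstair l δ j - Lstair l δ (j + 1)) := by
      rw [hc, sub_mul, sub_mul, mul_assoc, Lsig_mul_piece hδ l hjK]
      ring
    have e2 : Lstair l δ j - Lstair l δ (j + 1) =
        Lstair l δ j * (1 - Lstair l δ (j + 1)) := by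
      rw [mul_sub, mul_one, Lstair_absorb hδ l (Nat.le_succ j)]
    rw [e1, e2, ← mul_assoc]
    exact Lmul_nonneg (Lstair_lower hl j) (sub_nonneg.mpr (Lstair_le_one l δ (j + 1)))
  · have e1 : c * Lstair l δ K = (l - (K : L) * δ) * Lstair l δ K := by
      rw [hc, sub_mul, sub_mul, mul_assoc, Lsig_mul_top hδ l K]
      ring
    rw [e1]
    exact Lstair_lower hl K

lemma Lfreudenthal_high {l δ : L} (hl : 0 ≤ l) (hδ : 0 ≤ δ) {K : ℕ}
    (hK : l ≤ (K : L) * δ) : l ≤ δ * Lsig l δ K + δ := by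
  rw [← sub_nonpos]
  set c := l - (δ * Lsig l δ K + δ) with hc
  rw [Ldecomp l δ c K]
  refine add_nonpos (Lsum_nonpos fun j hj => ?_) ?_
  · have hjK : j ≤ K := le_of_lt (Finset.mem_range.mp hj)
    have e2 : Lstair l δ j - Lstair l δ (j + 1) =
        Lstair l δ j * (1 - Lstair l δ (j + 1)) := by
      rw [mul_sub, mul_one, Lstair_absorb hδ l (Nat.le_succ j)]
    have e1 : c * (Lstair l δ j - Lstair l δ (j + 1)) =
        (l - ((j : L) + 1) * δ) * (Lstair l δ j - Lstair l δ (j + 1)) := by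
      rw [hc, sub_mul, add_mul, mul_assoc, Lsig_mul_piece hδ l hjK]
      ring
    have e3 : (l - ((j : L) + 1) * δ) * (Lstair l δ j * (1 - Lstair l δ (j + 1))) =
        Lstair l δ j * ((l - ((j : L) + 1) * δ) * (1 - Lstair l δ (j + 1))) := by ring
    rw [e1, e2, e3]
    refine Lmul_nonpos (Lstair_nonneg l δ j) ?_
    have hup := Lstair_upper l δ (j + 1)
    have h2 : ((j + 1 : ℕ) : L) = ((j : L) + 1) := by push_cast; ring
    rw [h2] at hup
    have h3 : (l - ((j : L) + 1) * δ) * (1 - Lstair l δ (j + 1)) =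
        -((((j : L) + 1) * δ - l) * (1 - Lstair l δ (j + 1))) := by ring
    rw [h3]
    exact neg_nonpos.mpr hup
  · have e1 : c * Lstair l δ K = (l - (K : L) * δ) * Lstair l δ K - δ * Lstair l δ K := by
      rw [hc, sub_mul, add_mul, mul_assoc, Lsig_mul_top hδ l K]
      ring
    rw [e1]
    refine sub_nonpos.mpr (le_trans (Lmul_nonpos' (sub_nonpos.mpr hK) (Lstair_nonneg l δ K)) ?_)
    exact Lmul_nonneg hδ (Lstair_nonneg l δ K)

end Freudenthal2
section Mod
variable {L : Type*} [DFAlgebra L] {X : Type*} [POModule L X]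

instance covX : CovariantClass X X (· + ·) (· ≤ ·) :=
  ⟨fun c a b h => POModule.add_le_add_left a b h c⟩
instance covX' : CovariantClass X X (Function.swap (· + ·)) (· ≤ ·) :=
  ⟨fun c a b h => by simpa [add_comm] using POModule.add_le_add_left a b h c⟩

lemma Xsmul_mono {l : L} (hl : 0 ≤ l) {a b : X} (h : a ≤ b) : l • a ≤ l • b :=
  POModule.smul_le_smul l hl a b h

lemma Xsmul_nonneg {l : L} (hl : 0 ≤ l) {x : X} (hx : 0 ≤ x) : 0 ≤ l • x := by
  simpa using Xsmul_mono hl hx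

lemma Xsmul_mono_left {k m : L} (h : k ≤ m) {x : X} (hx : 0 ≤ x) : k • x ≤ m • x := by
  have h1 : 0 ≤ (m - k) • x := Xsmul_nonneg (sub_nonneg.mpr h) hx
  rw [sub_smul] at h1
  exact sub_nonneg.mp h1

lemma Xnsmul_nonneg {x : X} (hx : 0 ≤ x) (n : ℕ) : 0 ≤ n • x := by
  induction n with
  | zero => simp
  | succ n ih => rw [succ_nsmul]; exact add_nonneg ih hx

end Mod

section TFacts
variable {L : Type*} [DFAlgebra L] {X : Type*} [POModule L X] {Y : Type*} [POModule L Y]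
variable {T : X → Y}
  (hpos : ∀ x : X, 0 ≤ x → 0 ≤ T x)
  (hadd : ∀ x y : X, 0 ≤ x → 0 ≤ y → T (x + y) = T x + T y)
  (hP : ∀ π : L, π * π = π → ∀ x : X, 0 ≤ x → T (π • x) = π • T x)

include hadd

lemma T_zero : T 0 = 0 := by
  have h := hadd 0 0 le_rfl le_rfl
  rw [add_zero] at h
  exact (left_eq_add.mp h)

include hpos

lemma T_mono {a b : X} (ha : 0 ≤ a) (h : a ≤ b) : T a ≤ T b := by
  have hba : 0 ≤ b - a := sub_nonneg.mpr h
  have h2 := hadd a (b - a) ha hba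
  rw [add_sub_cancel] at h2
  rw [h2]
  exact le_add_of_nonneg_right (hpos _ hba)

omit hpos in
lemma T_nsmul {x : X} (hx : 0 ≤ x) (n : ℕ) : T (n • x) = n • T x := by
  induction n with
  | zero => simpa using T_zero hadd
  | succ n ih =>
    rw [succ_nsmul, hadd _ _ (Xnsmul_nonneg hx n) hx, ih, succ_nsmul]

/-- `T` commutes with the scalar `1/(m+1)`. -/
lemma T_inv {x : X} (hx : 0 ≤ x) (m : ℕ) :
    T ((algebraMap ℝ L (1 / (m + 1))) • x) = (algebraMap ℝ L (1 / (m + 1))) • T x := by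
  set ε : L := algebraMap ℝ L (1 / (m + 1)) with hε
  have hεn : 0 ≤ ε := DFAlgebra.algebraMap_nonneg _ (by positivity)
  have hz : 0 ≤ ε • x := Xsmul_nonneg hεn hx
  have hcast : ((m + 1 : ℕ) : L) = algebraMap ℝ L ((m : ℝ) + 1) := by
    rw [map_add, map_one, map_natCast]
    push_cast; ring
  have hmul : ((m + 1 : ℕ) : L) * ε = 1 := by
    rw [hcast, hε, ← map_mul]
    rw [show ((m : ℝ) + 1) * (1 / (m + 1)) = 1 by field_simp]
    exact map_one _
  have hxz : (m + 1) • (ε • x) = x := by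
    rw [← Nat.cast_smul_eq_nsmul L, ← mul_smul, hmul, one_smul]
  have h1 : T x = (m + 1) • T (ε • x) := by
    rw [← hxz, T_nsmul hadd hz, hxz]
  calc T (ε • x) = (ε * ((m + 1 : ℕ) : L)) • T (ε • x) := by
        rw [mul_comm, hmul, one_smul]
  _ = ε • (((m + 1 : ℕ) : L) • T (ε • x)) := mul_smul _ _ _
  _ = ε • ((m + 1) • T (ε • x)) := by rw [Nat.cast_smul_eq_nsmul]
  _ = ε • T x := by rw [← h1]

end TFacts
section Hom
variable {L : Type*} [DFAlgebra L] {X : Type*} [POModule L X] {Y : Type*} [POModule L Y]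

lemma Lglb_inv : IsGLB (Set.range fun m : ℕ => algebraMap ℝ L (1 / (m + 1))) 0 := by
  constructor
  · rintro _ ⟨m, rfl⟩
    exact DFAlgebra.algebraMap_nonneg _ (by positivity)
  · intro b hb
    have hble : ∀ n : ℕ, n • b ≤ (1 : L) := by
      intro n
      rcases Nat.eq_zero_or_pos n with hn | hn
      · rw [hn, zero_smul]; exact Lone_nonneg
      · have h1 : b ≤ algebraMap ℝ L (1 / n) := by
          have h0 : b ≤ algebraMap ℝ L (1 / (((n - 1 : ℕ) : ℝ) + 1)) := hb ⟨n - 1, rfl⟩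
          have hc : ((n - 1 : ℕ) : ℝ) + 1 = (n : ℝ) := by
            have h1n : (1:ℕ) ≤ n := hn
            push_cast [Nat.cast_sub h1n]
            ring
          rwa [hc] at h0
        have h2 : (n : L) * b ≤ (n : L) * algebraMap ℝ L (1 / n) :=
          Lmul_le_mul_left h1 (Lnatcast_nonneg n)
        have h3 : (n : L) * algebraMap ℝ L (1 / n) = 1 := by
          rw [← map_natCast (algebraMap ℝ L) n, ← map_mul]
          rw [show (n : ℝ) * (1 / n) = 1 by field_simp [Nat.cast_ne_zero.mpr (by omega : n ≠ 0)]]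
          exact map_one _
        rw [nsmul_eq_mul]
        rw [h3] at h2
        exact h2
    exact Larch hble

variable {T : X → Y}
  (hpos : ∀ x : X, 0 ≤ x → 0 ≤ T x)
  (hadd : ∀ x y : X, 0 ≤ x → 0 ≤ y → T (x + y) = T x + T y)
  (hP : ∀ π : L, π * π = π → ∀ x : X, 0 ≤ x → T (π • x) = π • T x)
  (hYarch : ∀ l : ℕ → L, Antitone l → IsGLB (Set.range l) 0 →
      ∀ x y : Y, 0 ≤ x → (∀ n, -(l n • x) ≤ y ∧ y ≤ l n • x) → y = 0)

include hpos hadd hP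

/-- staircase approximation commutes with T. -/
lemma T_stair {l δ : L} (hδ : 0 ≤ δ) (K : ℕ) {x : X} (hx : 0 ≤ x)
    (hδT : ∀ z : X, 0 ≤ z → T (δ • z) = δ • T z) :
    T ((δ * Lsig l δ K) • x) = (δ * Lsig l δ K) • T x := by
  unfold Lsig
  rw [Finset.mul_sum]
  rw [Finset.sum_smul, Finset.sum_smul]
  have hterm : ∀ k, T ((δ * Lstair l δ (k + 1)) • x) = (δ * Lstair l δ (k + 1)) • T x := by
    intro k
    have hEx : 0 ≤ Lstair l δ (k + 1) • x := Xsmul_nonneg (Lstair_nonneg l δ (k + 1)) hx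
    rw [mul_smul, hδT _ hEx, hP _ (Lstair_idem l δ (k + 1)) x hx, mul_smul]
  have hsum : ∀ (F : Finset ℕ), T (∑ k ∈ F, (δ * Lstair l δ (k + 1)) • x) =
      ∑ k ∈ F, T ((δ * Lstair l δ (k + 1)) • x) := by
    intro F
    induction F using Finset.induction with
    | empty => simpa using T_zero hadd
    | @insert j F hj ih =>
      rw [Finset.sum_insert hj, Finset.sum_insert hj,
        hadd _ _ (Xsmul_nonneg (Lmul_nonneg hδ (Lstair_nonneg l δ (j + 1))) hx)
          (by
            refine Finset.sum_induction _ (fun z => 0 ≤ z) (fun _ _ => add_nonneg) le_rfl ?_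
            exact fun k _ => Xsmul_nonneg (Lmul_nonneg hδ (Lstair_nonneg l δ (k + 1))) hx),
        ih]
  rw [hsum]
  exact Finset.sum_congr rfl fun k _ => hterm k

include hYarch in
/-- homogeneity for bounded scalars. -/
lemma T_smul_bounded {l : L} (hl : 0 ≤ l) {N : ℕ} (hN : l ≤ (N : L)) {x : X} (hx : 0 ≤ x) :
    T (l • x) = l • T x := by
  set y := T (l • x) - l • T x with hy
  have hTx : 0 ≤ T x := hpos x hx
  have hbd : ∀ m : ℕ, -(algebraMap ℝ L (1 / (m + 1)) • T x) ≤ y ∧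
      y ≤ algebraMap ℝ L (1 / (m + 1)) • T x := by
    intro m
    set δ : L := algebraMap ℝ L (1 / (m + 1)) with hδdef
    have hδ : 0 ≤ δ := DFAlgebra.algebraMap_nonneg _ (by positivity)
    set K : ℕ := N * (m + 1) with hK
    have hKδ : (K : L) * δ = (N : L) := by
      rw [← map_natCast (algebraMap ℝ L) K, ← map_mul, ← map_natCast (algebraMap ℝ L) N]
      congr 1
      rw [hK]
      push_cast
      field_simp
    have hlK : l ≤ (K : L) * δ := by rw [hKδ]; exact hN
    set s : L := δ * Lsig l δ K with hs
    have hσ : 0 ≤ Lsig l δ K := Lsig_nonneg l δ K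
    have hsn : 0 ≤ s := Lmul_nonneg hδ hσ
    have hlow : s ≤ l := Lfreudenthal_low hl hδ K
    have hhigh : l ≤ s + δ := Lfreudenthal_high hl hδ hlK
    have hTs : T (s • x) = s • T x :=
      T_stair hpos hadd hP hδ K hx (fun z hz => T_inv hpos hadd hz m)
    -- upper bound on T (l • x)
    have h1 : T (l • x) ≤ s • T x + δ • T x := by
      have : l • x ≤ (s + δ) • x := Xsmul_mono_left hhigh hx
      have h2 := T_mono hpos hadd (Xsmul_nonneg hl hx) this
      rwa [add_smul, hadd _ _ (Xsmul_nonneg hsn hx) (Xsmul_nonneg hδ hx), hTs,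
        T_inv hpos hadd hx m] at h2
    have h2 : s • T x ≤ T (l • x) := by
      have : s • x ≤ l • x := Xsmul_mono_left hlow hx
      have h3 := T_mono hpos hadd (Xsmul_nonneg hsn hx) this
      rwa [hTs] at h3
    have h3 : s • T x ≤ l • T x := Xsmul_mono_left hlow hTx
    have h4 : l • T x ≤ s • T x + δ • T x := by
      have := Xsmul_mono_left hhigh hTx
      rwa [add_smul] at this
    constructor
    · rw [hy, neg_le, neg_sub]
      calc l • T x - T (l • x) ≤ (s • T x + δ • T x) - s • T x := sub_le_sub h4 h2
      _ = δ • T x := by abel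
    · rw [hy]
      calc T (l • x) - l • T x ≤ (s • T x + δ • T x) - s • T x := sub_le_sub h1 h3
      _ = δ • T x := by abel
  have hanti : Antitone fun m : ℕ => algebraMap ℝ L (1 / (m + 1) : ℝ) := by
    intro m n hmn
    have : (1 / (n + 1) : ℝ) ≤ (1 / (m + 1) : ℝ) := by
      apply one_div_le_one_div_of_le (by positivity)
      exact_mod_cast add_le_add_left (Nat.cast_le.mpr hmn) 1
    have h2 : 0 ≤ algebraMap ℝ L (1 / (m + 1) - 1 / (n + 1)) :=
      DFAlgebra.algebraMap_nonneg _ (by linarith)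
    rw [map_sub] at h2
    exact sub_nonneg.mp h2
  have h0 := hYarch _ hanti Lglb_inv (T x) y hTx hbd
  rw [hy] at h0
  exact sub_eq_zero.mp h0

end Hom
section Hom2
variable {L : Type*} [DFAlgebra L] {X : Type*} [POModule L X] {Y : Type*} [POModule L Y]
variable {T : X → Y}
  (hpos : ∀ x : X, 0 ≤ x → 0 ≤ T x)
  (hadd : ∀ x y : X, 0 ≤ x → 0 ≤ y → T (x + y) = T x + T y)
  (hP : ∀ π : L, π * π = π → ∀ x : X, 0 ≤ x → T (π • x) = π • T x)
  (hYarch : ∀ l : ℕ → L, Antitone l → IsGLB (Set.range l) 0 →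
      ∀ x y : Y, 0 ≤ x → (∀ n, -(l n • x) ≤ y ∧ y ≤ l n • x) → y = 0)

include hpos hadd hP hYarch

/-- full homogeneity for nonnegative scalars. -/
lemma T_smul_nonneg {l : L} (hl : 0 ≤ l) {x : X} (hx : 0 ≤ x) :
    T (l • x) = l • T x := by
  set y := T (l • x) - l • T x with hy
  have hlx : 0 ≤ l • x := Xsmul_nonneg hl hx
  have hTlx : 0 ≤ T (l • x) := hpos _ hlx
  have hlTx : 0 ≤ l • T x := Xsmul_nonneg hl (hpos x hx)
  set z : Y := T (l • x) + l • T x with hz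
  have hzn : 0 ≤ z := add_nonneg hTlx hlTx
  set e : ℕ → L := fun N => Lcut l ((N : ℕ) : L) with he
  have hen : ∀ N, 0 ≤ e N := fun N => Lcut_nonneg _ _
  have he1 : ∀ N, e N ≤ 1 := fun N => Lcut_le_one _ _
  -- each πN := 1 - e N kills y
  have hkill : ∀ N : ℕ, (1 - e N) • y = 0 := by
    intro N
    set π : L := 1 - e N with hπ
    have hπn : 0 ≤ π := sub_nonneg.mpr (he1 N)
    have hπidem : π * π = π := by
      have h : e N * e N = e N := Lcut_idem l _
      rw [hπ]
      linear_combination h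
    set l' : L := l * π with hl'
    have hl'n : 0 ≤ l' := Lmul_nonneg hl hπn
    have hl'N : l' ≤ ((N : ℕ) : L) := by
      have hup : 0 ≤ (((N : ℕ) : L) - l) * π := Lcut_upper l _
      rw [sub_mul] at hup
      have h1 : l * π ≤ ((N : ℕ) : L) * π := sub_nonneg.mp hup
      refine le_trans h1 ?_
      have h2 : ((N : ℕ) : L) * π ≤ ((N : ℕ) : L) * 1 :=
        Lmul_le_mul_left (by rw [hπ]; simpa using hen N) (Lnatcast_nonneg N)
      rwa [mul_one] at h2
    have hbd := T_smul_bounded hpos hadd hP hYarch hl'n hl'N hx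
    have h3 : l' • x = π • (l • x) := by rw [hl', mul_comm, mul_smul]
    have h4 : l' • T x = π • (l • T x) := by rw [hl', mul_comm, mul_smul]
    rw [h3, h4, hP π hπidem _ hlx] at hbd
    rw [hy, smul_sub, hbd, sub_self]
  -- y = e N • y, bounded by e N • z
  have hyz : y ≤ z := by
    rw [hy, hz, sub_le_iff_le_add, add_assoc]
    exact le_add_of_nonneg_right (add_nonneg hlTx hlTx)
  have hmyz : -z ≤ y := by
    have h1 : y - -z = T (l • x) + T (l • x) := by rw [hy, hz]; abel
    have h2 : (0:Y) ≤ y - -z := by rw [h1]; exact add_nonneg hTlx hTlx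
    exact sub_nonneg.mp h2
  have hbd : ∀ N : ℕ, -(e N • z) ≤ y ∧ y ≤ e N • z := by
    intro N
    have hyeq : y = e N • y := by
      have h1 : y = ((1 - e N) + e N) • y := by rw [sub_add_cancel, one_smul]
      rw [add_smul, hkill N, zero_add] at h1
      exact h1
    constructor
    · have h2 : e N • (-z) ≤ e N • y := Xsmul_mono (hen N) hmyz
      rw [smul_neg] at h2
      rw [hyeq]
      exact h2
    · rw [hyeq]
      exact Xsmul_mono (hen N) hyz
  have hanti : Antitone e := fun M N h => Lcut_mono (Lnatcast_mono h)
  have hglb : IsGLB (Set.range e) 0 := by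
    constructor
    · rintro _ ⟨N, rfl⟩; exact hen N
    · intro b hb
      refine Larch (c := l) fun N => ?_
      have h1 : (N : L) * b ≤ (N : L) * e N :=
        Lmul_le_mul_left (hb ⟨N, rfl⟩) (Lnatcast_nonneg N)
      have h2 : (N : L) * e N ≤ l * e N := by
        have h3 : 0 ≤ (l - ((N : ℕ) : L)) * e N := Lcut_lower l _
        rw [sub_mul] at h3
        exact sub_nonneg.mp h3
      have h4 : l * e N ≤ l := by
        have h5 := Lmul_le_mul_left (he1 N) hl
        rwa [mul_one] at h5
      rw [nsmul_eq_mul]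
      exact le_trans h1 (le_trans h2 h4)
  have h0 := hYarch e hanti hglb z y hzn hbd
  rw [hy] at h0
  exact sub_eq_zero.mp h0

end Hom2
/-- Extension theorem: an additive P-homogeneous map between the positive cones
of directed PO L-modules, with Y sequentially almost Archimedean, extends
uniquely to a positive L-module homomorphism. -/
theorem stmt10 (L X Y : Type*) [DFAlgebra L] [POModule L X] [POModule L Y]
    (hXdir : ∀ x : X, ∃ a b : X, 0 ≤ a ∧ 0 ≤ b ∧ x = a - b)
    (hYdir : ∀ y : Y, ∃ a b : Y, 0 ≤ a ∧ 0 ≤ b ∧ y = a - b)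
    (hYarch : ∀ l : ℕ → L, Antitone l → IsGLB (Set.range l) 0 →
      ∀ x y : Y, 0 ≤ x → (∀ n, -(l n • x) ≤ y ∧ y ≤ l n • x) → y = 0)
    (T : X → Y)
    (hpos : ∀ x : X, 0 ≤ x → 0 ≤ T x)
    (hadd : ∀ x y : X, 0 ≤ x → 0 ≤ y → T (x + y) = T x + T y)
    (hP : ∀ π : L, π * π = π → ∀ x : X, 0 ≤ x → T (π • x) = π • T x) :
    ∃! S : X →ₗ[L] Y,
      (∀ x : X, 0 ≤ x → S x = T x) ∧ (∀ x : X, 0 ≤ x → 0 ≤ S x) := by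
  classical
  have hTsmul : ∀ l : L, 0 ≤ l → ∀ x : X, 0 ≤ x → T (l • x) = l • T x :=
    fun l hl x hx => T_smul_nonneg hpos hadd hP hYarch hl hx
  have key : ∀ p q r s : X, 0 ≤ p → 0 ≤ q → 0 ≤ r → 0 ≤ s → p - q = r - s →
      T p - T q = T r - T s := by
    intro p q r s hp hq hr hs h
    have h1 : p + s = r + q := sub_eq_sub_iff_add_eq_add.mp h
    have h2 : T (p + s) = T (r + q) := by rw [h1]
    rw [hadd p s hp hs, hadd r q hr hq] at h2
    have h3 : T p - T q - (T r - T s) = (T p + T s) - (T r + T q) := by abel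
    rw [h2, sub_self] at h3
    exact sub_eq_zero.mp h3
  choose a b ha hb hab using hXdir
  have f_eq : ∀ (x p q : X), 0 ≤ p → 0 ≤ q → x = p - q →
      T (a x) - T (b x) = T p - T q := by
    intro x p q hp hq h
    exact key (a x) (b x) p q (ha x) (hb x) hp hq (by rw [← hab x, h])
  have f_add : ∀ x y : X, T (a (x + y)) - T (b (x + y)) =
      (T (a x) - T (b x)) + (T (a y) - T (b y)) := by
    intro x y
    have h1 : x + y = (a x + a y) - (b x + b y) := by
      conv_lhs => rw [hab x, hab y]
      abel
    rw [f_eq _ _ _ (add_nonneg (ha x) (ha y)) (add_nonneg (hb x) (hb y)) h1,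
      hadd _ _ (ha x) (ha y), hadd _ _ (hb x) (hb y)]
    abel
  have f_smul : ∀ (c : L) (x : X), T (a (c • x)) - T (b (c • x)) =
      c • (T (a x) - T (b x)) := by
    intro c x
    set cp : L := c ⊔ 0 with hcp
    set cn : L := (-c) ⊔ 0 with hcn
    have hc : cp - cn = c := Lpos_sub_neg c
    have hcpn : 0 ≤ cp := le_sup_right
    have hcnn : 0 ≤ cn := le_sup_right
    have hp : 0 ≤ cp • a x + cn • b x :=
      add_nonneg (Xsmul_nonneg hcpn (ha x)) (Xsmul_nonneg hcnn (hb x))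
    have hq : 0 ≤ cp • b x + cn • a x :=
      add_nonneg (Xsmul_nonneg hcpn (hb x)) (Xsmul_nonneg hcnn (ha x))
    have h1 : c • x = (cp • a x + cn • b x) - (cp • b x + cn • a x) := by
      conv_lhs => rw [hab x, ← hc, sub_smul, smul_sub, smul_sub]
      abel
    rw [f_eq _ _ _ hp hq h1,
      hadd _ _ (Xsmul_nonneg hcpn (ha x)) (Xsmul_nonneg hcnn (hb x)),
      hadd _ _ (Xsmul_nonneg hcpn (hb x)) (Xsmul_nonneg hcnn (ha x)),
      hTsmul cp hcpn _ (ha x), hTsmul cn hcnn _ (hb x),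
      hTsmul cp hcpn _ (hb x), hTsmul cn hcnn _ (ha x),
      ← hc, sub_smul, smul_sub, smul_sub]
    abel
  set S : X →ₗ[L] Y :=
    { toFun := fun x => T (a x) - T (b x)
      map_add' := f_add
      map_smul' := f_smul } with hS
  have hagree : ∀ x : X, 0 ≤ x → S x = T x := by
    intro x hx
    have h1 : S x = T x - T 0 := f_eq x x 0 hx le_rfl (by rw [sub_zero])
    rw [h1, T_zero hadd, sub_zero]
  refine ⟨S, ⟨hagree, fun x hx => by rw [hagree x hx]; exact hpos x hx⟩, ?_⟩
  rintro S' ⟨hS', -⟩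
  ext x
  calc S' x = S' (a x - b x) := by rw [← hab x]
  _ = S' (a x) - S' (b x) := map_sub _ _ _
  _ = T (a x) - T (b x) := by rw [hS' _ (ha x), hS' _ (hb x)]
  _ = S x := rfl
end
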